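/- If H is a convex subgraph of a graph G and X is a k-ftmv set of G, then X ∩ V(H) is a k-ftmv set of H; in particular fμᵏ(H) ≤ fμᵏ(G). -/

import Mathlib

open SimpleGraph

variable {V : Type*}

/-- `X` is a `k`-fault-tolerant mutual-visibility set of `G`: for any two distinct
non-adjacent vertices `u v ∈ X` there are `k+1` internally disjoint shortest
`u,v`-paths whose only vertices in `X` are `u` and `v`. -/
def IsFtmvSet (G : SimpleGraph V) (k : ℕ) (X : Set V) : Prop :=
  ∀ u ∈ X, ∀ v ∈ X, u ≠ v → ¬ G.Adj u v →
    ∃ P : Fin (k + 1) → G.Path u v,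
      (∀ i, (P i).1.length = G.dist u v) ∧
      (∀ i, ∀ w ∈ (P i).1.support, w ∈ X → w = u ∨ w = v) ∧
      (∀ i j, i ≠ j → ∀ w, w ∈ (P i).1.support → w ∈ (P j).1.support → w = u ∨ w = v)

/-- The `k`-fault-tolerant mutual-visibility number: maximum cardinality of a `k`-ftmv set. -/
noncomputable def ftmvNum (G : SimpleGraph V) (k : ℕ) : ℕ :=
  sSup {n | ∃ X : Set V, IsFtmvSet G k X ∧ X.ncard = n}

/-- The clique number of `G`. -/
noncomputable def cliqueNum' (G : SimpleGraph V) : ℕ :=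
  sSup {n | ∃ s : Finset V, G.IsNClique n s}

/-- A set `S` is convex in `G` if every shortest path between vertices of `S`
lies entirely in `S`. -/
def IsConvexSet (G : SimpleGraph V) (S : Set V) : Prop :=
  ∀ u ∈ S, ∀ v ∈ S, ∀ p : G.Walk u v, p.IsPath → p.length = G.dist u v →
    ∀ w ∈ p.support, w ∈ S


lemma lift_walk {G : SimpleGraph V} {S : Set V} :
    ∀ {a b : V} (p : G.Walk a b) (ha : a ∈ S) (hb : b ∈ S)
      (_ : ∀ w ∈ p.support, w ∈ S),
      ∃ q : (G.induce S).Walk ⟨a, ha⟩ ⟨b, hb⟩,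
        q.map (Embedding.induce S).toHom = p := by
  intro a b p
  induction p with
  | nil => intro ha hb _; exact ⟨Walk.nil, rfl⟩
  | @cons u c d h p ih =>
    intro ha hb hsup
    have hc : c ∈ S := hsup c (by simp)
    obtain ⟨q, hq⟩ := ih hc hb (fun w hw => hsup w (by simp [hw]))
    exact ⟨Walk.cons (by exact h : (G.induce S).Adj ⟨u, ha⟩ ⟨c, hc⟩) q, by exact congrArg (Walk.cons h) hq⟩

lemma dist_induce_eq {G : SimpleGraph V} (hconn : G.Connected) {S : Set V}
    (hS : ∀ u ∈ S, ∀ v ∈ S, ∀ p : G.Walk u v, p.IsPath → p.length = G.dist u v →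
      ∀ w ∈ p.support, w ∈ S)
    (a b : S) : (G.induce S).dist a b = G.dist a b := by
  obtain ⟨a, ha⟩ := a; obtain ⟨b, hb⟩ := b
  rcases eq_or_ne a b with rfl | hne
  · rw [dist_self, dist_self]
  obtain ⟨p, hp, hlen⟩ := (hconn a b).exists_path_of_dist
  have hsub : ∀ w ∈ p.support, w ∈ S := hS a ha b hb p hp hlen
  obtain ⟨q, hq⟩ := lift_walk p ha hb hsub
  have h1 : (G.induce S).dist ⟨a, ha⟩ ⟨b, hb⟩ ≤ G.dist a b := by
    have := SimpleGraph.dist_le q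
    rwa [show q.length = p.length by exact (Walk.length_map _ q).symm.trans (congrArg Walk.length hq), hlen] at this
  have h2 : G.dist a b ≤ (G.induce S).dist ⟨a, ha⟩ ⟨b, hb⟩ := by
    obtain ⟨r, hr⟩ := Reachable.exists_walk_length_eq_dist ⟨q⟩
    have := SimpleGraph.dist_le (r.map (Embedding.induce S).toHom)
    rwa [Walk.length_map, hr] at this
  exact le_antisymm h1 h2
theorem stmt5 [Fintype V] (G : SimpleGraph V) (hconn : G.Connected)
    (S : Set V) (hS : IsConvexSet G S) (k : ℕ) :
    (∀ X : Set V, IsFtmvSet G k X → IsFtmvSet (G.induce S) k (Subtype.val ⁻¹' X)) ∧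
    ftmvNum (G.induce S) k ≤ ftmvNum G k := by
  have hdist := dist_induce_eq hconn hS
  constructor
  · intro X hX u hu v hv huv hadj
    have hne : (u : V) ≠ v := fun h => huv (Subtype.ext h)
    have hadj' : ¬ G.Adj u v := hadj
    obtain ⟨P, hlen, hmem, hdisj⟩ := hX u hu v hv hne hadj'
    have hsub : ∀ i, ∀ w ∈ (P i).1.support, w ∈ S :=
      fun i => hS u u.2 v v.2 (P i).1 (P i).2 (hlen i)
    choose Q hQ using fun i => lift_walk (P i).1 u.2 v.2 (hsub i)
    have hQlen : ∀ i, (Q i).length = G.dist u v := by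
      intro i; rw [← hlen i]; exact (Walk.length_map _ (Q i)).symm.trans (congrArg Walk.length (hQ i))
    have hQsup : ∀ i, ∀ w : S, w ∈ (Q i).support → (w : V) ∈ (P i).1.support := by
      intro i w hw
      have h2 : (w : V) ∈ ((Q i).map (Embedding.induce S).toHom).support := by
        rw [Walk.support_map]; exact List.mem_map.mpr ⟨w, hw, rfl⟩
      rw [hQ i] at h2; exact h2
    have hQpath : ∀ i, (Q i).IsPath := by
      intro i
      have : ((Q i).map (Embedding.induce S).toHom).IsPath := by rw [hQ i]; exact (P i).2
      exact this.of_map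
    refine ⟨fun i => ⟨Q i, hQpath i⟩, ?_, ?_, ?_⟩
    · intro i; rw [hQlen i, hdist u v]
    · intro i w hw hwX
      rcases hmem i w (hQsup i w hw) hwX with h | h
      · exact Or.inl (Subtype.ext h)
      · exact Or.inr (Subtype.ext h)
    · intro i j hij w hwi hwj
      rcases hdisj i j hij w (hQsup i w hwi) (hQsup j w hwj) with h | h
      · exact Or.inl (Subtype.ext h)
      · exact Or.inr (Subtype.ext h)
  · -- ftmvNum inequality
    set A := {n | ∃ X : Set S, IsFtmvSet (G.induce S) k X ∧ X.ncard = n}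
    set B := {n | ∃ X : Set V, IsFtmvSet G k X ∧ X.ncard = n}
    have hAB : A ⊆ B := by
      rintro n ⟨Y, hY, rfl⟩
      refine ⟨Subtype.val '' Y, ?_, (Set.ncard_image_of_injective Y Subtype.val_injective).symm ▸ rfl⟩
      rintro u ⟨a, ha, rfl⟩ v ⟨b, hb, rfl⟩ hne hadj
      have hab : a ≠ b := fun h => hne (h ▸ rfl)
      have hadj' : ¬ (G.induce S).Adj a b := hadj
      obtain ⟨Q, hlen, hmem, hdisj⟩ := hY a ha b hb hab hadj'
      refine ⟨fun i => (Q i).map (Embedding.induce S).toHom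
        (Subtype.val_injective), ?_, ?_, ?_⟩
      · intro i
        show ((Q i).1.map _).length = _
        rw [Walk.length_map, hlen i, hdist a b]
      · intro i w hw hwX
        obtain ⟨c, hc, rfl⟩ : ∃ c ∈ (Q i).1.support, (Embedding.induce (G := G) S).toHom c = w := by
          have hw2 : w ∈ ((Q i).1.map (Embedding.induce S).toHom).support := hw
          simpa only [Walk.support_map, List.mem_map] using hw2
        obtain ⟨y, hy, hyc⟩ := hwX
        have : c ∈ Y := (Subtype.val_injective hyc.symm) ▸ hy
        rcases hmem i c hc this with h | h
        · exact Or.inl (congrArg Subtype.val h)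
        · exact Or.inr (congrArg Subtype.val h)
      · intro i j hij w hwi hwj
        obtain ⟨c, hc, rfl⟩ : ∃ c ∈ (Q i).1.support, (Embedding.induce (G := G) S).toHom c = w := by
          have hw2 : w ∈ ((Q i).1.map (Embedding.induce S).toHom).support := hwi
          simpa only [Walk.support_map, List.mem_map] using hw2
        obtain ⟨d, hd, hdc⟩ : ∃ d ∈ (Q j).1.support, (Embedding.induce (G := G) S).toHom d = (Embedding.induce (G := G) S).toHom c := by
          have hw2 : (Embedding.induce (G := G) S).toHom c ∈ ((Q j).1.map (Embedding.induce S).toHom).support := hwj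
          simpa only [Walk.support_map, List.mem_map] using hw2
        have : d = c := (Embedding.induce (G := G) S).injective hdc
        subst this
        rcases hdisj i j hij d hc hd with h | h
        · exact Or.inl (congrArg Subtype.val h)
        · exact Or.inr (congrArg Subtype.val h)
    rcases Set.eq_empty_or_nonempty A with hA | hA
    · have h0 : ftmvNum (G.induce S) k = 0 := by
        unfold ftmvNum
        rw [show {n | ∃ X : Set ↥S, IsFtmvSet (G.induce S) k X ∧ X.ncard = n} = A from rfl, hA]
        simp
      simp [h0]
    · have hBdd : BddAbove B := by
        refine ⟨Fintype.card V, ?_⟩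
        rintro n ⟨X, _, rfl⟩
        have := Set.ncard_le_ncard (Set.subset_univ X) Set.finite_univ
        rwa [Set.ncard_univ, Nat.card_eq_fintype_card] at this
      exact csSup_le_csSup hBdd hA hAB
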